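/- Let 0 < α < 1 and define, for 0 < β < 1, ρ(α,β) = 2 + 2β − 2α² inf_{γ ∈ Γ_{α,β}} F_{2,β}(γ), where F_{h,β}(γ) = γ²(1−β) + h(1 − γ(1−β))²/β and Γ_{α,β} = {γ ≥ 0 : 2 − 2β − 2α² F_{0,β}(γ) ≥ 0}. Then for all 0 < β < 1 one has ρ(α,β) ≥ 2 + 2β − 2α² F_{2,β}(1) = 2(1 − α²)(1 + β), and moreover β ↦ ρ(α,β) is nondecreasing on (0,1). -/
import Mathlib


open MeasureTheory ProbabilityTheory Real Filter

noncomputable section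

/-- The constant `g = 2 / π`. -/
def gconst : ℝ := 2 / Real.pi

/-- The lattice box `V_N = {1, …, N}² ⊆ ℤ²`. -/
def latBox (N : ℕ) : Finset (ℤ × ℤ) :=
  Finset.Icc (1 : ℤ) (N : ℤ) ×ˢ Finset.Icc (1 : ℤ) (N : ℤ)

/-- Nearest-neighbor adjacency in `ℤ²`. -/
def adj (p q : ℤ × ℤ) : Prop := |p.1 - q.1| + |p.2 - q.2| = 1

open Classical in
/-- The boundary `∂V_N`: points of `V_N` having a nearest neighbor outside `V_N`. -/
def latBdry (N : ℕ) : Finset (ℤ × ℤ) :=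
  (latBox N).filter fun p => ∃ q, q ∉ latBox N ∧ adj p q

/-- The interior `int(V_N)`. -/
def latInt (N : ℕ) : Finset (ℤ × ℤ) := latBox N \ latBdry N

open Classical in
/-- The Hamiltonian `H(φ) = (1/8) Σ_{x,y ∈ V_N, |x-y|=1} (φ_x - φ_y)²`. -/
def ham (N : ℕ) (φ : ℤ × ℤ → ℝ) : ℝ :=
  (1 / 8) * ∑ p ∈ latBox N, ∑ q ∈ latBox N, if adj p q then (φ p - φ q) ^ 2 else 0

/-- Extension by zero outside the interior of the box (zero boundary conditions). -/
def extendZero (N : ℕ) (φ : {p // p ∈ latInt N} → ℝ) : ℤ × ℤ → ℝ :=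
  fun p => if h : p ∈ latInt N then φ ⟨p, h⟩ else 0

/-- The law `P` of the two-dimensional discrete Gaussian free field on `V_N`:
the Gibbs measure on fields with zero boundary conditions whose density with
respect to Lebesgue measure on the interior coordinates is proportional to
`exp(-H(Φ))`. -/
def gibbs (N : ℕ) : Measure ((ℤ × ℤ) → ℝ) :=
  let μ : Measure ({p // p ∈ latInt N} → ℝ) :=
    volume.withDensity fun φ => ENNReal.ofReal (Real.exp (-ham N (extendZero N φ)))
  (μ Set.univ)⁻¹ • μ.map (extendZero N)

/-- Euclidean distance between lattice points. -/
def eDist (p q : ℤ × ℤ) : ℝ :=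
  Real.sqrt (((p.1 - q.1 : ℤ) : ℝ) ^ 2 + ((p.2 - q.2 : ℤ) : ℝ) ^ 2)

open Classical in
/-- `V_N^l`: points of `V_N` at Euclidean distance at least `l·N` from `V_Nᶜ`. -/
def innerBox (N : ℕ) (l : ℝ) : Finset (ℤ × ℤ) :=
  (latBox N).filter fun p => ∀ q, q ∉ latBox N → l * N ≤ eDist p q

/-- The entropic repulsion event `Ω_{N,l}^+ = {Φ_x ≥ 0 for all x ∈ V_N^l}`. -/
def posEvent (N : ℕ) (l : ℝ) : Set ((ℤ × ℤ) → ℝ) := {ω | ∀ p ∈ innerBox N l, 0 ≤ ω p}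

open Classical in
/-- The set `H_N(η) = {x ∈ V_N^l : Φ_x ≥ 2√g η log N}` of `η`-high points. -/
def highSet (N : ℕ) (l η : ℝ) (ω : (ℤ × ℤ) → ℝ) : Finset (ℤ × ℤ) :=
  (innerBox N l).filter fun x => 2 * Real.sqrt gconst * η * Real.log N ≤ ω x

/-- The square box `B(x, a)` of center `x` and side length `a`, intersected with `ℤ²`. -/
def sqBox (x : ℤ × ℤ) (a : ℝ) : Set (ℤ × ℤ) :=
  {y | 2 * |((y.1 - x.1 : ℤ) : ℝ)| ≤ a ∧ 2 * |((y.2 - x.2 : ℤ) : ℝ)| ≤ a}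

/-- `F_{h,β}(γ) = γ²(1-β) + h(1-γ(1-β))²/β`. -/
def Ffun (h β γ : ℝ) : ℝ := γ ^ 2 * (1 - β) + h * (1 - γ * (1 - β)) ^ 2 / β

/-- The constraint set `Γ_{α,β} = {γ ≥ 0 : 2 - 2β - 2α² F_{0,β}(γ) ≥ 0}`. -/
def Gam (α β : ℝ) : Set ℝ := {γ | 0 ≤ γ ∧ 0 ≤ 2 - 2 * β - 2 * α ^ 2 * Ffun 0 β γ}

/-- The pair-count exponent `ρ(α,β) = 2 + 2β - 2α² inf_{γ ∈ Γ_{α,β}} F_{2,β}(γ)`. -/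
def rhoExp (α β : ℝ) : ℝ := 2 + 2 * β - 2 * α ^ 2 * sInf (Ffun 2 β '' Gam α β)

/-- The σ-algebra `F_A` generated by the field coordinates in `A`. -/
def coordSigma (A : Set (ℤ × ℤ)) : MeasurableSpace ((ℤ × ℤ) → ℝ) :=
  MeasurableSpace.comap (fun ω (p : A) => ω (p : ℤ × ℤ)) inferInstance

/-- The boundary of a set `S ⊆ ℤ²`: points of `S` with a nearest neighbor outside `S`. -/
def setBdry (S : Set (ℤ × ℤ)) : Set (ℤ × ℤ) := {p ∈ S | ∃ q, q ∉ S ∧ adj p q}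

/-- `Φ_B = E(Φ_{x_B} | F_{∂B})` for the box `B` of center `z` and side length `a`. -/
def boxField (N : ℕ) (z : ℤ × ℤ) (a : ℝ) : ((ℤ × ℤ) → ℝ) → ℝ :=
  (gibbs N)[(fun ω => ω z)|coordSigma (setBdry (sqBox z a))]

/-- Properties of the exponent `ρ(α,β)`: the lower bound
`ρ(α,β) ≥ 2 + 2β - 2α²F_{2,β}(1) = 2(1-α²)(1+β)`, and monotonicity in `β`. -/
theorem rhoExp_lower_bound_and_monotone (α : ℝ) (hα0 : 0 < α) (hα1 : α < 1) :
    (∀ β ∈ Set.Ioo (0 : ℝ) 1,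
      2 + 2 * β - 2 * α ^ 2 * Ffun 2 β 1 ≤ rhoExp α β ∧
      2 + 2 * β - 2 * α ^ 2 * Ffun 2 β 1 = 2 * (1 - α ^ 2) * (1 + β)) ∧
    (∀ β₁ ∈ Set.Ioo (0 : ℝ) 1, ∀ β₂ ∈ Set.Ioo (0 : ℝ) 1, β₁ ≤ β₂ →
      rhoExp α β₁ ≤ rhoExp α β₂) := by
  have hα2 : (0:ℝ) < α ^ 2 := by positivity
  -- characterization of Gam
  have gam_iff : ∀ β ∈ Set.Ioo (0:ℝ) 1, ∀ γ : ℝ,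
      (γ ∈ Gam α β ↔ 0 ≤ γ ∧ α ^ 2 * γ ^ 2 ≤ 1) := by
    intro β hβ γ
    obtain ⟨hβ0, hβ1⟩ := hβ
    have hF : Ffun 0 β γ = γ ^ 2 * (1 - β) := by
      unfold Ffun; simp
    constructor
    · rintro ⟨h1, h2⟩
      rw [hF] at h2
      refine ⟨h1, ?_⟩
      nlinarith
    · rintro ⟨h1, h2⟩
      refine ⟨h1, ?_⟩
      rw [hF]
      nlinarith
  -- 1 ∈ Gam α β
  have hmem1 : ∀ β ∈ Set.Ioo (0:ℝ) 1, (1:ℝ) ∈ Gam α β := by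
    intro β hβ
    rw [gam_iff β hβ 1]
    constructor
    · norm_num
    · nlinarith [hβ.1, hβ.2]
  -- bounded below
  have hbdd : ∀ β ∈ Set.Ioo (0:ℝ) 1, BddBelow (Ffun 2 β '' Gam α β) := by
    intro β hβ
    refine ⟨0, ?_⟩
    rintro y ⟨γ, hγ, rfl⟩
    obtain ⟨hβ0, hβ1⟩ := hβ
    have h1 : 0 ≤ 2 * (1 - γ * (1 - β)) ^ 2 / β := by positivity
    unfold Ffun
    nlinarith [mul_nonneg (sq_nonneg γ) (show (0:ℝ) ≤ 1 - β by linarith)]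
  have hne : ∀ β ∈ Set.Ioo (0:ℝ) 1, (Ffun 2 β '' Gam α β).Nonempty := by
    intro β hβ
    exact ⟨Ffun 2 β 1, 1, hmem1 β hβ, rfl⟩
  constructor
  · intro β hβ
    obtain ⟨hβ0, hβ1⟩ := hβ
    have hF1 : Ffun 2 β 1 = 1 + β := by
      unfold Ffun; field_simp; ring
    have hle : sInf (Ffun 2 β '' Gam α β) ≤ Ffun 2 β 1 :=
      csInf_le (hbdd β ⟨hβ0, hβ1⟩) ⟨1, hmem1 β ⟨hβ0, hβ1⟩, rfl⟩
    constructor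
    · unfold rhoExp
      nlinarith
    · rw [hF1]; ring
  · intro β₁ hβ₁ β₂ hβ₂ hle
    -- key : sInf S₂ ≤ sInf S₁ + (β₂ - β₁)/α²
    have key : sInf (Ffun 2 β₂ '' Gam α β₂) - (β₂ - β₁) / α ^ 2 ≤
        sInf (Ffun 2 β₁ '' Gam α β₁) := by
      apply le_csInf (hne β₁ hβ₁)
      rintro y ⟨γ, hγ, rfl⟩
      have hγc := (gam_iff β₁ hβ₁ γ).1 hγ
      have hγ2 : γ ∈ Gam α β₂ := (gam_iff β₂ hβ₂ γ).2 hγc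
      have h2 : sInf (Ffun 2 β₂ '' Gam α β₂) ≤ Ffun 2 β₂ γ :=
        csInf_le (hbdd β₂ hβ₂) ⟨γ, hγ2, rfl⟩
      have hβ10 := hβ₁.1
      have hβ20 := hβ₂.1
      have hpt : Ffun 2 β₂ γ ≤ Ffun 2 β₁ γ + (β₂ - β₁) / α ^ 2 := by
        have e1 : Ffun 2 β₁ γ = γ ^ 2 * (1 - β₁) + 2 * (1 - γ) ^ 2 / β₁
            + 4 * γ * (1 - γ) + 2 * γ ^ 2 * β₁ := by
          unfold Ffun; field_simp; ring
        have e2 : Ffun 2 β₂ γ = γ ^ 2 * (1 - β₂) + 2 * (1 - γ) ^ 2 / β₂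
            + 4 * γ * (1 - γ) + 2 * γ ^ 2 * β₂ := by
          unfold Ffun; field_simp; ring
        have hdiv : 2 * (1 - γ) ^ 2 / β₂ ≤ 2 * (1 - γ) ^ 2 / β₁ :=
          div_le_div_of_nonneg_left (by positivity) hβ10 hle
        have hsq : γ ^ 2 * (β₂ - β₁) ≤ (β₂ - β₁) / α ^ 2 := by
          rw [le_div_iff₀ hα2]
          nlinarith [hγc.2]
        rw [e1, e2]
        linarith
      linarith
    unfold rhoExp
    have hmul := mul_le_mul_of_nonneg_left key (le_of_lt hα2)
    have hc : α ^ 2 * ((β₂ - β₁) / α ^ 2) = β₂ - β₁ := by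
      field_simp
    nlinarith
end
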